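/- Let n ≥ 2 be an integer and c, ε, ω ∈ ℂ. Let f : ℂ → ℂ be meromorphic on all of ℂ, analytic at 0, with f(0) = 0 and f′(0) = 1. Assume: (a) for every z_1, …, z_n ∈ ℂ such that for all i ≠ j the function f is analytic at z_j − z_i and f(z_j − z_i) ≠ 0, one has ∑_{i=1}^n ∏_{j≠i} 1/f(z_j − z_i) = c; and (b) f(z + ω) = ε·f(z) for every z ∈ ℂ at which f is analytic at both z and z + ω. Then εⁿ = 1 and (ε − 1)·c = 0. -/

import Mathlib

open Finset Filter Topology

private lemma hirz_aux_noTop (f : ℂ → ℂ) (hmer : MeromorphicOn f Set.univ)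
    (hf00 : f 0 = 0) (hf0' : deriv f 0 = 1) (z : ℂ) :
    ¬ (∀ᶠ w in 𝓝[≠] z, f w = 0) := by
  set O : Set ℂ := {z : ℂ | ∀ᶠ w in 𝓝[≠] z, f w = 0} with hO
  suffices hOE : O = ∅ by
    intro h
    have : z ∈ O := h
    simp [hOE] at this
  have hopen : IsOpen O := by
    rw [isOpen_iff_mem_nhds]
    intro x hx
    replace hx : ∀ᶠ w in 𝓝[≠] x, f w = 0 := hx
    rw [eventually_nhdsWithin_iff] at hx
    filter_upwards [hx.eventually_nhds, eventually_mem_nhds_iff.mpr hx] with w hw hw'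
    by_cases hwx : w = x
    · subst hwx; show ∀ᶠ u in 𝓝[≠] w, f u = 0
      exact eventually_nhdsWithin_iff.mpr hw
    · show ∀ᶠ u in 𝓝[≠] w, f u = 0
      have : ∀ᶠ u in 𝓝 w, f u = 0 := by
        filter_upwards [hw, eventually_ne_nhds hwx] with u h1 h2
        exact h1 h2
      exact (this.filter_mono nhdsWithin_le_nhds)
  have hclosed : IsClosed O := by
    rw [← isOpen_compl_iff, isOpen_iff_mem_nhds]
    intro x hx
    replace hx : ¬ (∀ᶠ w in 𝓝[≠] x, f w = 0) := hx
    have hmx := hmer x (Set.mem_univ x)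
    have hne : meromorphicOrderAt f x ≠ ⊤ := fun htop => hx (meromorphicOrderAt_eq_top_iff.mp htop)
    obtain ⟨m, hm⟩ := WithTop.ne_top_iff_exists.mp hne
    obtain ⟨g, hg, hgz, hfg⟩ := (meromorphicOrderAt_eq_int_iff hmx).mp hm.symm
    have hg' : ∀ᶠ w in 𝓝 x, g w ≠ 0 := hg.continuousAt.eventually_ne hgz
    have hfne : ∀ᶠ w in 𝓝[≠] x, f w ≠ 0 := by
      filter_upwards [hfg, hg'.filter_mono nhdsWithin_le_nhds,
        eventually_mem_nhdsWithin] with w h1 h2 h3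
      rw [h1]
      exact smul_ne_zero (zpow_ne_zero _ (sub_ne_zero.mpr h3)) h2
    rw [eventually_nhdsWithin_iff] at hfne
    filter_upwards [hfne.eventually_nhds, eventually_mem_nhds_iff.mpr hfne] with w hw hw'
    intro hwO
    replace hwO : ∀ᶠ u in 𝓝[≠] w, f u = 0 := hwO
    by_cases hwx : w = x
    · subst hwx
      have : ∀ᶠ u in 𝓝[≠] w, f u = 0 ∧ f u ≠ 0 := by
        refine hwO.and (eventually_nhdsWithin_iff.mpr ?_)
        filter_upwards [hw'] with u hu; exact hu
      obtain ⟨u, h1, h2⟩ := this.exists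
      exact h2 h1
    · have hne' : ∀ᶠ u in 𝓝[≠] w, f u ≠ 0 := by
        apply Filter.Eventually.filter_mono nhdsWithin_le_nhds
        filter_upwards [hw, eventually_ne_nhds hwx] with u h1 h2
        exact h1 h2
      obtain ⟨u, h1, h2⟩ := (hwO.and hne').exists
      exact h2 h1
  rcases isClopen_iff.mp ⟨hclosed, hopen⟩ with h | h
  · exact h
  · exfalso
    have h0 : ∀ᶠ w in 𝓝[≠] (0:ℂ), f w = 0 := by
      have : (0:ℂ) ∈ O := by rw [h]; trivial
      exact this
    have : ∀ᶠ w in 𝓝 (0:ℂ), f w = 0 := by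
      rw [eventually_nhdsWithin_iff] at h0
      filter_upwards [h0] with w hw
      by_cases h : w = 0
      · subst h; exact hf00
      · exact hw h
    rw [Filter.EventuallyEq.deriv_eq (this.mono fun w hw => hw)] at hf0'
    rw [deriv_const] at hf0'
    exact one_ne_zero hf0'.symm

private lemma hirz_aux_G (f : ℂ → ℂ) (hmer : MeromorphicOn f Set.univ)
    (hf00 : f 0 = 0) (hf0' : deriv f 0 = 1) :
    IsOpen {w : ℂ | AnalyticAt ℂ f w ∧ f w ≠ 0} ∧
    Dense {w : ℂ | AnalyticAt ℂ f w ∧ f w ≠ 0} := by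
  set G : Set ℂ := {w : ℂ | AnalyticAt ℂ f w ∧ f w ≠ 0} with hG
  have hev : ∀ z : ℂ, ∀ᶠ w in 𝓝[≠] z, w ∈ G := by
    intro z
    have hmz := hmer z (Set.mem_univ z)
    have hne : meromorphicOrderAt f z ≠ ⊤ :=
      fun htop => hirz_aux_noTop f hmer hf00 hf0' z (meromorphicOrderAt_eq_top_iff.mp htop)
    obtain ⟨m, hm⟩ := WithTop.ne_top_iff_exists.mp hne
    obtain ⟨g, hg, hgz, hfg⟩ := (meromorphicOrderAt_eq_int_iff hmz).mp hm.symm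
    have hg' : ∀ᶠ w in 𝓝[≠] z, g w ≠ 0 :=
      (hg.continuousAt.eventually_ne hgz).filter_mono nhdsWithin_le_nhds
    filter_upwards [hmz.eventually_analyticAt, hfg, hg', eventually_mem_nhdsWithin]
      with w h1 h2 h3 h4
    refine ⟨h1, ?_⟩
    rw [h2]
    exact smul_ne_zero (zpow_ne_zero _ (sub_ne_zero.mpr h4)) h3
  constructor
  · rw [isOpen_iff_mem_nhds]
    rintro x ⟨hx1, hx2⟩
    filter_upwards [hx1.eventually_analyticAt, hx1.continuousAt.eventually_ne hx2]
      with w h1 h2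
    exact ⟨h1, h2⟩
  · intro x
    rw [mem_closure_iff_frequently]
    exact ((hev x).frequently).filter_mono nhdsWithin_le_nhds

private lemma hirz_aux_identity (n : ℕ) (hn : 2 ≤ n) [NeZero n] (c ε ω : ℂ) (f : ℂ → ℂ)
    (hsol : ∀ z : Fin n → ℂ,
      (∀ i j : Fin n, i ≠ j → AnalyticAt ℂ f (z j - z i) ∧ f (z j - z i) ≠ 0) →
      ∑ i : Fin n, ∏ j ∈ univ.erase i, (f (z j - z i))⁻¹ = c)
    (hper : ∀ z : ℂ, AnalyticAt ℂ f z → AnalyticAt ℂ f (z + ω) → f (z + ω) = ε * f z)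
    (t : ℂ) (z z' : Fin n → ℂ)
    (hz : ∀ i, z i = (i : ℕ) * t)
    (hz' : ∀ i, z' i = (i : ℕ) * t + (if i = 0 then ω else 0))
    (h1 : ∀ i j : Fin n, i ≠ j → AnalyticAt ℂ f (z j - z i) ∧ f (z j - z i) ≠ 0)
    (h2 : ∀ i j : Fin n, i ≠ j → AnalyticAt ℂ f (z' j - z' i) ∧ f (z' j - z' i) ≠ 0) :
    (ε ^ n - 1) * ∏ j ∈ univ.erase (0 : Fin n), (f (z j - z 0))⁻¹ = (ε - 1) * c := by
  have hc1 := hsol z h1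
  have hc2 := hsol z' h2
  have key0 : ∀ j : Fin n, j ≠ 0 → f (z j - z 0) = ε * f (z' j - z' 0) := by
    intro j hj
    have hj' : (0 : Fin n) ≠ j := Ne.symm hj
    have heq : z' j - z' 0 + ω = z j - z 0 := by
      simp [hz, hz', if_neg hj]
      try ring
    have := hper (z' j - z' 0) (h2 0 j hj').1 (by rw [heq]; exact (h1 0 j hj').1)
    rw [heq] at this
    exact this
  have keyi : ∀ i : Fin n, i ≠ 0 → f (z' 0 - z' i) = ε * f (z 0 - z i) := by
    intro i hi
    have heq : z 0 - z i + ω = z' 0 - z' i := by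
      simp [hz, hz', if_neg hi]
      try ring
    have := hper (z 0 - z i) (h1 i 0 hi).1 (by rw [heq]; exact (h2 i 0 hi).1)
    rw [heq] at this
    exact this
  have h10 : (1 : Fin n) ≠ 0 := by
    simp [Fin.ext_iff, Fin.val_one', Nat.mod_eq_of_lt (by omega : 1 < n)]
  have hε : ε ≠ 0 := by
    intro h
    have := key0 1 h10
    rw [h, zero_mul] at this
    exact (h1 0 1 (Ne.symm h10)).2 this
  set Q : Fin n → ℂ := fun i => ∏ j ∈ univ.erase i, (f (z j - z i))⁻¹ with hQ
  set Q' : Fin n → ℂ := fun i => ∏ j ∈ univ.erase i, (f (z' j - z' i))⁻¹ with hQ'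
  have stepA : Q' 0 = ε ^ (n - 1) * Q 0 := by
    simp only [hQ', hQ]
    have : ∀ j ∈ univ.erase (0 : Fin n), (f (z' j - z' 0))⁻¹ = ε * (f (z j - z 0))⁻¹ := by
      intro j hj
      have hj0 : j ≠ 0 := (mem_erase.mp hj).1
      rw [key0 j hj0, mul_inv, ← mul_assoc, mul_inv_cancel₀ hε, one_mul]
    rw [Finset.prod_congr rfl this, Finset.prod_mul_distrib, Finset.prod_const,
      Finset.card_erase_of_mem (mem_univ _), card_univ, Fintype.card_fin]
  have stepB : ∀ i : Fin n, i ≠ 0 → ε * Q' i = Q i := by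
    intro i hi
    have h0mem : (0 : Fin n) ∈ univ.erase i := mem_erase.mpr ⟨Ne.symm hi, mem_univ _⟩
    simp only [hQ', hQ]
    rw [← Finset.mul_prod_erase _ _ h0mem, ← Finset.mul_prod_erase _ _ h0mem]
    have hinner : ∏ j ∈ (univ.erase i).erase 0, (f (z' j - z' i))⁻¹
        = ∏ j ∈ (univ.erase i).erase 0, (f (z j - z i))⁻¹ := by
      refine Finset.prod_congr rfl fun j hj => ?_
      have hj0 : j ≠ 0 := (mem_erase.mp hj).1
      have : z' j - z' i = z j - z i := by simp [hz, hz', if_neg hj0, if_neg hi]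
      rw [this]
    rw [hinner, ← mul_assoc]
    congr 1
    rw [keyi i hi, mul_inv, ← mul_assoc, mul_inv_cancel₀ hε, one_mul]
  have hsum1 : Q 0 + ∑ i ∈ univ.erase (0 : Fin n), Q i = c := by
    rw [Finset.add_sum_erase _ _ (mem_univ _)]; exact hc1
  have hsum2 : Q' 0 + ∑ i ∈ univ.erase (0 : Fin n), Q' i = c := by
    rw [Finset.add_sum_erase _ _ (mem_univ _)]; exact hc2
  have hsumB : ∑ i ∈ univ.erase (0 : Fin n), ε * Q' i = ∑ i ∈ univ.erase (0 : Fin n), Q i :=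
    Finset.sum_congr rfl fun i hi => stepB i (mem_erase.mp hi).1
  have hpow : ε * ε ^ (n - 1) = ε ^ n := by
    rw [← pow_succ']
    congr 1
    omega
  have H : ε * c = ε ^ n * Q 0 + (c - Q 0) := by
    calc ε * c = ε * Q' 0 + ∑ i ∈ univ.erase (0 : Fin n), ε * Q' i := by
          rw [← Finset.mul_sum, ← mul_add, hsum2]
    _ = ε ^ n * Q 0 + (c - Q 0) := by
          rw [stepA, hsumB, ← mul_assoc, hpow]
          have : ∑ i ∈ univ.erase (0 : Fin n), Q i = c - Q 0 := by
            linear_combination hsum1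
          rw [this]
  linear_combination (-1 : ℂ) * H

/-- If a meromorphic solution `f` of the Hirzebruch functional equation for `n` with constant
`c` (normalized by `f(0) = 0`, `f'(0) = 1`) has a periodicity property `f(z + ω) = ε f(z)`,
then `εⁿ = 1` and `(ε - 1) c = 0`. -/
theorem hirzebruch_periodicity (n : ℕ) (hn : 2 ≤ n) (c ε ω : ℂ) (f : ℂ → ℂ)
    (hmer : MeromorphicOn f Set.univ)
    (hf0 : AnalyticAt ℂ f 0) (hf00 : f 0 = 0) (hf0' : deriv f 0 = 1)
    (hsol : ∀ z : Fin n → ℂ,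
      (∀ i j : Fin n, i ≠ j → AnalyticAt ℂ f (z j - z i) ∧ f (z j - z i) ≠ 0) →
      ∑ i : Fin n, ∏ j ∈ univ.erase i, (f (z j - z i))⁻¹ = c)
    (hper : ∀ z : ℂ, AnalyticAt ℂ f z → AnalyticAt ℂ f (z + ω) → f (z + ω) = ε * f z) :
    ε ^ n = 1 ∧ (ε - 1) * c = 0 := by
  haveI : NeZero n := ⟨by omega⟩
  obtain ⟨hGopen, hGdense⟩ := hirz_aux_G f hmer hf00 hf0'
  set G : Set ℂ := {w : ℂ | AnalyticAt ℂ f w ∧ f w ≠ 0} with hGdef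
  set sh : Fin n → ℂ := fun i => if i = 0 then ω else 0 with hsh
  set ι := {q : Fin n × Fin n // q.1 ≠ q.2} with hι
  set a : ι → ℂ := fun p => ((p.1.2 : ℕ) : ℂ) - ((p.1.1 : ℕ) : ℂ) with ha
  set b : ι → ℂ := fun p => sh p.1.2 - sh p.1.1 with hb
  have ha0 : ∀ p : ι, a p ≠ 0 := by
    intro p
    have hval : ((p.1.2 : ℕ) : ℂ) ≠ ((p.1.1 : ℕ) : ℂ) := by
      have : (p.1.2 : ℕ) ≠ (p.1.1 : ℕ) := fun h => p.2 (Fin.val_injective h).symm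
      exact_mod_cast this
    exact sub_ne_zero.mpr hval
  have hOD : ∀ (α β : ℂ), α ≠ 0 → IsOpen ((fun t => α * t + β) ⁻¹' G) ∧
      Dense ((fun t => α * t + β) ⁻¹' G) := by
    intro α β hα
    have hom : IsOpenMap (fun t : ℂ => α * t + β) :=
      (Homeomorph.addRight β).isOpenMap.comp (Homeomorph.mulLeft₀ α hα).isOpenMap
    have hcont : Continuous (fun t : ℂ => α * t + β) := by fun_prop
    exact ⟨hGopen.preimage hcont, hGdense.preimage hom⟩
  set U : ι → Set ℂ := fun p =>
    ((fun t => a p * t + 0) ⁻¹' G) ∩ ((fun t => a p * t + b p) ⁻¹' G) with hU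
  have hUopen : ∀ p, IsOpen (U p) :=
    fun p => ((hOD _ 0 (ha0 p)).1).inter ((hOD _ (b p) (ha0 p)).1)
  have hUdense : ∀ p, Dense (U p) :=
    fun p => ((hOD _ 0 (ha0 p)).2).inter_of_isOpen_left ((hOD _ (b p) (ha0 p)).2)
      ((hOD _ 0 (ha0 p)).1)
  set T : Set ℂ := ⋂ p : ι, U p with hT
  have hTdense : Dense T := dense_iInter_of_isOpen hUopen hUdense
  -- the key identity at every good parameter
  set P : ℂ → ℂ := fun t => ∏ j ∈ univ.erase (0 : Fin n), (f (((j : ℕ) : ℂ) * t))⁻¹ with hP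
  have hid : ∀ t ∈ T, (ε ^ n - 1) * P t = (ε - 1) * c ∧ P t ≠ 0 := by
    intro t ht
    set z : Fin n → ℂ := fun i => ((i : ℕ) : ℂ) * t with hzdef
    set z' : Fin n → ℂ := fun i => ((i : ℕ) : ℂ) * t + (if i = 0 then ω else 0) with hz'def
    have hmem : ∀ i j : Fin n, i ≠ j →
        (AnalyticAt ℂ f (z j - z i) ∧ f (z j - z i) ≠ 0) ∧
        (AnalyticAt ℂ f (z' j - z' i) ∧ f (z' j - z' i) ≠ 0) := by
      intro i j hij
      have hp := Set.mem_iInter.mp ht ⟨(i, j), hij⟩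
      obtain ⟨m1, m2⟩ := hp
      have e1 : z j - z i = a ⟨(i, j), hij⟩ * t + 0 := by
        simp only [hzdef, ha]
        ring
      have e2 : z' j - z' i = a ⟨(i, j), hij⟩ * t + b ⟨(i, j), hij⟩ := by
        simp only [hz'def, ha, hb, hsh]
        ring
      rw [e1, e2]
      exact ⟨m1, m2⟩
    have h1 : ∀ i j : Fin n, i ≠ j → AnalyticAt ℂ f (z j - z i) ∧ f (z j - z i) ≠ 0 :=
      fun i j hij => (hmem i j hij).1
    have h2 : ∀ i j : Fin n, i ≠ j → AnalyticAt ℂ f (z' j - z' i) ∧ f (z' j - z' i) ≠ 0 :=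
      fun i j hij => (hmem i j hij).2
    have hidd := hirz_aux_identity n hn c ε ω f hsol hper t z z'
      (fun i => rfl) (fun i => rfl) h1 h2
    have hPeq : ∏ j ∈ univ.erase (0 : Fin n), (f (z j - z 0))⁻¹ = P t := by
      refine Finset.prod_congr rfl fun j hj => ?_
      have : z j - z 0 = ((j : ℕ) : ℂ) * t := by
        simp [hzdef]
      rw [this]
    constructor
    · rw [hPeq] at hidd; exact hidd
    · rw [hP]
      rw [Finset.prod_ne_zero_iff]
      intro j hj
      have hj0 : j ≠ 0 := (mem_erase.mp hj).1
      have := (h1 0 j (Ne.symm hj0)).2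
      have hzz : z j - z 0 = ((j : ℕ) : ℂ) * t := by simp [hzdef]
      rw [hzz] at this
      exact inv_ne_zero this
  obtain ⟨t₀, ht₀⟩ := hTdense.nonempty
  by_cases hεn : ε ^ n = 1
  · refine ⟨hεn, ?_⟩
    have := (hid t₀ ht₀).1
    rw [hεn, sub_self, zero_mul] at this
    exact this.symm
  · exfalso
    -- P is constant K ≠ 0 on T
    set K : ℂ := (ε - 1) * c / (ε ^ n - 1) with hK
    have hPconst : ∀ t ∈ T, P t = K := by
      intro t ht
      have := (hid t ht).1
      rw [hK, eq_div_iff (sub_ne_zero.mpr hεn)]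
      linear_combination this
    have hK0 : K ≠ 0 := by
      rw [← hPconst t₀ ht₀]
      exact (hid t₀ ht₀).2
    -- so the product of f values equals K⁻¹ on T
    have hprodK : ∀ t ∈ T, ∏ j ∈ univ.erase (0 : Fin n), f (((j : ℕ) : ℂ) * t) = K⁻¹ := by
      intro t ht
      have h1 : ∏ j ∈ univ.erase (0 : Fin n), (f (((j : ℕ) : ℂ) * t))⁻¹ = K := hPconst t ht
      rw [Finset.prod_inv_distrib] at h1
      rw [← h1, inv_inv]
    -- small good t makes the product small
    set m : ℝ := min 1 (‖K⁻¹‖ / 2) with hm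
    have hm0 : 0 < m := by
      have hKi : 0 < ‖K⁻¹‖ := norm_pos_iff.mpr (inv_ne_zero hK0)
      apply lt_min one_pos
      linarith
    obtain ⟨δ, hδ0, hδ⟩ := Metric.continuousAt_iff.mp hf0.continuousAt m hm0
    have hnR : (0:ℝ) < (n:ℝ) := by exact_mod_cast (by omega : 0 < n)
    have hball : (Metric.ball (0:ℂ) (δ / n)).Nonempty := by
      apply Metric.nonempty_ball.mpr
      positivity
    obtain ⟨t₁, ht₁T, ht₁b⟩ := hTdense.exists_mem_open Metric.isOpen_ball hball
    have ht₁small : ∀ j : Fin n, ‖((j : ℕ) : ℂ) * t₁‖ < δ := by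
      intro j
      rw [norm_mul]
      have hjn : ‖((j : ℕ) : ℂ)‖ ≤ (n : ℝ) := by
        rw [Complex.norm_natCast]
        exact_mod_cast (j.2.le)
      have htb : ‖t₁‖ < δ / n := by
        have := Metric.mem_ball.mp ht₁b
        rwa [dist_zero_right] at this
      calc ‖((j : ℕ) : ℂ)‖ * ‖t₁‖ ≤ (n : ℝ) * ‖t₁‖ :=
            mul_le_mul_of_nonneg_right hjn (norm_nonneg _)
      _ < (n : ℝ) * (δ / n) := by
            exact mul_lt_mul_of_pos_left htb hnR
      _ = δ := by
            field_simp
    have hfsmall : ∀ j : Fin n, ‖f (((j : ℕ) : ℂ) * t₁)‖ ≤ m := by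
      intro j
      have := hδ (show dist (((j : ℕ) : ℂ) * t₁) 0 < δ by
        rw [dist_zero_right]; exact ht₁small j)
      rw [hf00, dist_zero_right] at this
      exact this.le
    have hprodsmall : ‖∏ j ∈ univ.erase (0 : Fin n), f (((j : ℕ) : ℂ) * t₁)‖ ≤ m := by
      rw [norm_prod]
      calc ∏ j ∈ univ.erase (0 : Fin n), ‖f (((j : ℕ) : ℂ) * t₁)‖
          ≤ ∏ j ∈ univ.erase (0 : Fin n), m :=
            Finset.prod_le_prod (fun j _ => norm_nonneg _) (fun j _ => hfsmall j)
      _ = m ^ (univ.erase (0 : Fin n)).card := by rw [Finset.prod_const]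
      _ ≤ m := by
            apply pow_le_of_le_one hm0.le (min_le_left _ _)
            rw [Finset.card_erase_of_mem (mem_univ _), card_univ, Fintype.card_fin]
            omega
    rw [hprodK t₁ ht₁T] at hprodsmall
    have : ‖K⁻¹‖ ≤ ‖K⁻¹‖ / 2 := le_trans hprodsmall (min_le_right _ _)
    have hKpos : 0 < ‖K⁻¹‖ := norm_pos_iff.mpr (inv_ne_zero hK0)
    linarith
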